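/- Let n ≥ 2 be an integer, P ≥ 0, w > 0, and f(x) = (P+w)/((n−1)·(1−x)^{2 + 1/(n−1)}·(P·x + w)^{1 − 1/(n−1)}). Then for every x ∈ [0,1): (i) the derivative at x of the function F(t) = ((w + n·P·(1−t) + P·t)/(n·(1−t)·(P+w)))·((P·t + w)/(1−t))^{1/(n−1)} equals f(x); and (ii) the derivative at x of the function G(t) = ((w − n·w·(1−t) + P·t)/(n·(1−t)·(P+w)))·((P·t + w)/(1−t))^{1/(n−1)} equals x·f(x). Hence F and G are antiderivatives of f and of x ↦ x·f(x) respectively on [0,1). -/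

import Mathlib

theorem stmt10 (n : ℕ) (hn : 2 ≤ n) (P w : ℝ) (hP : 0 ≤ P) (hw : 0 < w)
    (f F G : ℝ → ℝ)
    (hf : ∀ x ∈ Set.Ico (0 : ℝ) 1,
      f x = (P + w) /
        (((n : ℝ) - 1) * (1 - x) ^ (2 + 1 / ((n : ℝ) - 1)) *
          (P * x + w) ^ (1 - 1 / ((n : ℝ) - 1))))
    (hF : ∀ t, F t = ((w + (n : ℝ) * P * (1 - t) + P * t) / ((n : ℝ) * (1 - t) * (P + w))) *
      ((P * t + w) / (1 - t)) ^ (1 / ((n : ℝ) - 1)))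
    (hG : ∀ t, G t = ((w - (n : ℝ) * w * (1 - t) + P * t) / ((n : ℝ) * (1 - t) * (P + w))) *
      ((P * t + w) / (1 - t)) ^ (1 / ((n : ℝ) - 1))) :
    ∀ x ∈ Set.Ico (0 : ℝ) 1,
      HasDerivAt F (f x) x ∧ HasDerivAt G (x * f x) x := by
  intro x hx
  obtain ⟨hx0, hx1⟩ := hx
  have h1x : (0:ℝ) < 1 - x := by linarith
  have hPx : (0:ℝ) < P * x + w := by nlinarith
  have hn2 : (2:ℝ) ≤ (n:ℝ) := by exact_mod_cast hn
  have hn1 : (0:ℝ) < (n:ℝ) - 1 := by linarith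
  have hnpos : (0:ℝ) < (n:ℝ) := by linarith
  have hPw : (0:ℝ) < P + w := by linarith
  set c : ℝ := 1 / ((n:ℝ) - 1) with hc
  have hBpos : 0 < (P * x + w) / (1 - x) := div_pos hPx h1x
  have hB : HasDerivAt (fun t => (P * t + w) / (1 - t)) ((P + w) / (1 - x)^2) x := by
    have h1 : HasDerivAt (fun t : ℝ => P * t + w) P x := by
      simpa using ((hasDerivAt_id x).const_mul P).add_const w
    have h2 : HasDerivAt (fun t : ℝ => 1 - t) (-1) x := by
      simpa using (hasDerivAt_id x).const_sub 1
    have h3 := h1.div h2 h1x.ne'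
    refine h3.congr_deriv ?_
    field_simp
    ring
  have hBc : HasDerivAt (fun t => ((P * t + w)/(1 - t)) ^ c)
      (((P + w) / (1 - x)^2) * c * ((P * x + w)/(1-x)) ^ (c - 1)) x :=
    hB.rpow_const (Or.inl hBpos.ne')
  have key : ∀ α β : ℝ, HasDerivAt
      (fun t => ((α + β * t)/((n:ℝ)*(1-t)*(P+w))) * ((P*t+w)/(1-t))^c)
      (((β * ((n:ℝ)*(1-x)*(P+w)) - (α + β*x) * (-((n:ℝ)*(P+w)))) / ((n:ℝ)*(1-x)*(P+w))^2) *
          ((P*x+w)/(1-x))^c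
        + ((α + β*x)/((n:ℝ)*(1-x)*(P+w))) *
          (((P+w)/(1-x)^2) * c * ((P*x+w)/(1-x))^(c-1))) x := by
    intro α β
    have hnum : HasDerivAt (fun t : ℝ => α + β * t) β x := by
      simpa using ((hasDerivAt_id x).const_mul β).const_add α
    have hden : HasDerivAt (fun t : ℝ => (n:ℝ)*(1-t)*(P+w)) (-((n:ℝ)*(P+w))) x := by
      have := (((hasDerivAt_id x).const_sub 1).const_mul (n:ℝ)).mul_const (P+w)
      refine this.congr_deriv ?_
      ring
    have hdne : (n:ℝ)*(1-x)*(P+w) ≠ 0 := by positivity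
    exact (hnum.div hden hdne).mul hBc
  -- rewrite f x in a convenient form
  have hfx : f x = (P + w) /
      (((n : ℝ) - 1) * ((1 - x) ^ 2 * (1 - x) ^ c) *
        ((P * x + w) / (P * x + w) ^ c)) := by
    rw [hf x ⟨hx0, hx1⟩, Real.rpow_add h1x, Real.rpow_two,
      Real.rpow_sub hPx, Real.rpow_one]
  have hu : (0:ℝ) < (1 - x) ^ c := Real.rpow_pos_of_pos h1x c
  have hv : (0:ℝ) < (P * x + w) ^ c := Real.rpow_pos_of_pos hPx c
  have hBcv : ((P*x+w)/(1-x))^c = (P*x+w)^c / (1-x)^c :=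
    Real.div_rpow hPx.le h1x.le c
  have hBc1 : ((P*x+w)/(1-x))^(c-1) = ((P*x+w)^c / (1-x)^c) / ((P*x+w)/(1-x)) := by
    rw [Real.rpow_sub_one hBpos.ne', hBcv]
  constructor
  · have hFd := key (w + (n:ℝ)*P) (P - (n:ℝ)*P)
    have hFeq : F =ᶠ[nhds x] (fun t => (((w + (n:ℝ)*P) + (P - (n:ℝ)*P) * t)/((n:ℝ)*(1-t)*(P+w))) * ((P*t+w)/(1-t))^c) := by
      filter_upwards with t
      rw [hF t]
      ring_nf
    refine (HasDerivAt.congr_of_eventuallyEq ?_ hFeq)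
    refine hFd.congr_deriv ?_
    rw [hfx, hBcv, hBc1, hc]
    field_simp
    ring
  · have hGd := key (w - (n:ℝ)*w) (P + (n:ℝ)*w)
    have hGeq : G =ᶠ[nhds x] (fun t => (((w - (n:ℝ)*w) + (P + (n:ℝ)*w) * t)/((n:ℝ)*(1-t)*(P+w))) * ((P*t+w)/(1-t))^c) := by
      filter_upwards with t
      rw [hG t]
      ring_nf
    refine (HasDerivAt.congr_of_eventuallyEq ?_ hGeq)
    refine hGd.congr_deriv ?_
    rw [hfx, hBcv, hBc1, hc]
    field_simp
    ring
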